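/- In an inner product category, every map f : A → B has a unique inner adjoint f* : B → A satisfying ⟨xf|y⟩ = ⟨x|yf*⟩ for all x, y; it is given explicitly by f* = φ_B ⋅ f† ⋅ φ_A^{-1}, where φ_X = ⟨1_X|1_X⟩. -/
import Mathlib


open CategoryTheory

universe v u

/-- An (achiral) involutive category: a contravariant endofunctor `(−)†`
together with a natural isomorphism `ι : X → X††` satisfying `ι_{X†} ≫ (ι_X)† = 1`. -/
structure Involutive (C : Type u) [Category.{v} C] where
  dob : C → C
  dmap : ∀ {X Y : C}, (X ⟶ Y) → (dob Y ⟶ dob X)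
  dmap_id : ∀ X : C, dmap (𝟙 X) = 𝟙 (dob X)
  dmap_comp : ∀ {X Y Z : C} (f : X ⟶ Y) (g : Y ⟶ Z), dmap (f ≫ g) = dmap g ≫ dmap f
  ι : ∀ X : C, X ⟶ dob (dob X)
  ιinv : ∀ X : C, dob (dob X) ⟶ X
  ι_hom_inv : ∀ X : C, ι X ≫ ιinv X = 𝟙 X
  ι_inv_hom : ∀ X : C, ιinv X ≫ ι X = 𝟙 (dob (dob X))
  ι_natural : ∀ {X Y : C} (f : X ⟶ Y), f ≫ ι Y = ι X ≫ dmap (dmap f)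
  ι_dagger : ∀ X : C, ι (dob X) ≫ dmap (ι X) = 𝟙 (dob X)

/-- A unitary structure on an involutive category: isomorphisms `φ_X : X → X†`
with `φ_{X†} = (φ_X⁻¹)†` and `φ_X ≫ φ_{X†} = ι_X`. -/
structure UnitaryStruct {C : Type u} [Category.{v} C] (D : Involutive C) where
  φ : ∀ X : C, X ⟶ D.dob X
  φinv : ∀ X : C, D.dob X ⟶ X
  φ_hom_inv : ∀ X : C, φ X ≫ φinv X = 𝟙 X
  φ_inv_hom : ∀ X : C, φinv X ≫ φ X = 𝟙 (D.dob X)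
  u1 : ∀ X : C, φ (D.dob X) = D.dmap (φinv X)
  u2 : ∀ X : C, φ X ≫ φ (D.dob X) = D.ι X

/-- An inner product combinator on an involutive category. -/
structure IPStruct {C : Type u} [Category.{v} C] (D : Involutive C) where
  ip : ∀ {A B X : C}, (A ⟶ X) → (B ⟶ X) → (A ⟶ D.dob B)

/-- The dual inner product `⟨h|k⟩^ι := ι_{A†} ≫ ⟨k†|h†⟩† ≫ ι_B⁻¹`. -/
def IPStruct.dual {C : Type u} [Category.{v} C] {D : Involutive C} (S : IPStruct D)
    {X A B : C} (h : X ⟶ A) (k : X ⟶ B) : D.dob A ⟶ B :=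
  D.ι (D.dob A) ≫ D.dmap (S.ip (D.dmap k) (D.dmap h)) ≫ D.ιinv B

/-- An inner product category: axioms [IP.1]–[IP.4]. -/
structure InnerProduct {C : Type u} [Category.{v} C] (D : Involutive C) extends IPStruct D where
  ip1 : ∀ {A B X Y Z : C} (f : A ⟶ X) (g : B ⟶ X) (h : Y ⟶ A) (k : Z ⟶ B),
    ip (h ≫ f) (k ≫ g) = h ≫ ip f g ≫ D.dmap k
  ip2a : ∀ {A B X : C} (f : A ⟶ X) (g : B ⟶ X),
    D.ι A ≫ toIPStruct.dual (D.dmap f) (D.dmap g) = ip f g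
  ip2b : ∀ {A B X : C} (f : A ⟶ X) (g : B ⟶ X),
    D.ι B ≫ D.dmap (ip f g) = ip g f
  ip3 : ∀ {A B X : C} (f : A ⟶ X) (g : B ⟶ X) (h k : X ⟶ B),
    h ≫ g = 𝟙 X → ip f g ≫ toIPStruct.dual h k = f ≫ k
  ip4 : ∀ {A X Z : C} (f : A ⟶ Z) (g : A ⟶ X) (h k : X ⟶ A),
    g ≫ h = 𝟙 A → toIPStruct.dual f g ≫ ip h k = D.dmap (k ≫ f)

/-- The inner product induced by a unitary structure: `⟨f|g⟩ := f ≫ φ_X ≫ g†`. -/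
def UnitaryStruct.uip {C : Type u} [Category.{v} C] {D : Involutive C} (U : UnitaryStruct D)
    {A B X : C} (f : A ⟶ X) (g : B ⟶ X) : A ⟶ D.dob B :=
  f ≫ U.φ X ≫ D.dmap g

/-- The dual inner product induced by a unitary structure. -/
def UnitaryStruct.udual {C : Type u} [Category.{v} C] {D : Involutive C} (U : UnitaryStruct D)
    {X A B : C} (h : X ⟶ A) (k : X ⟶ B) : D.dob A ⟶ B :=
  D.ι (D.dob A) ≫ D.dmap (U.uip (D.dmap k) (D.dmap h)) ≫ D.ιinv B

/-- The inner adjoint `f* := φ_B ≫ f† ≫ φ_A⁻¹` of `f : A ⟶ B`. -/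
def UnitaryStruct.adj {C : Type u} [Category.{v} C] {D : Involutive C} (U : UnitaryStruct D)
    {A B : C} (f : A ⟶ B) : B ⟶ A :=
  U.φ B ≫ D.dmap f ≫ U.φinv A

/-- In an inner product category (viewed via its unitary structure, with
`⟨f|g⟩ := f ≫ φ ≫ g†`), every map `f : A → B` has a unique inner adjoint
`f* : B → A` satisfying `⟨xf|y⟩ = ⟨x|yf*⟩` for all `x`, `y`, given explicitly by
`f* = φ_B ≫ f† ≫ φ_A⁻¹`. -/

lemma iota_dmap_phi {C : Type u} [Category.{v} C] {D : Involutive C} (U : UnitaryStruct D)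
    (X : C) : D.ι X ≫ D.dmap (U.φ X) = U.φ X := by
  have h : D.ι X = U.φ X ≫ D.dmap (U.φinv X) := by rw [← U.u1, U.u2]
  rw [h, Category.assoc, ← D.dmap_comp, U.φ_hom_inv, D.dmap_id, Category.comp_id]

lemma phi_dd_iotainv {C : Type u} [Category.{v} C] {D : Involutive C} (U : UnitaryStruct D)
    (X : C) : D.dmap (U.φinv X) ≫ D.ιinv X = U.φinv X := by
  have h : D.dmap (U.φinv X) = U.φinv X ≫ D.ι X := by
    rw [← U.u1, ← U.u2, ← Category.assoc, U.φ_inv_hom, Category.id_comp]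
  rw [h, Category.assoc, D.ι_hom_inv, Category.comp_id]

lemma adj_key {C : Type u} [Category.{v} C] {D : Involutive C} (U : UnitaryStruct D)
    {A B : C} (f : A ⟶ B) : f ≫ U.φ B = U.φ A ≫ D.dmap (U.adj f) := by
  unfold UnitaryStruct.adj
  rw [D.dmap_comp, D.dmap_comp, ← U.u1, ← Category.assoc, ← Category.assoc, U.u2,
    Category.assoc, ← Category.assoc, ← D.ι_natural, Category.assoc, iota_dmap_phi]

theorem inner_adjoint_exists_unique {C : Type u} [Category.{v} C]
    (D : Involutive C) (U : UnitaryStruct D) {A B : C} (f : A ⟶ B) :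
    (∀ (W Z : C) (x : W ⟶ A) (y : Z ⟶ B),
      U.uip (x ≫ f) y = U.uip x (y ≫ U.adj f)) ∧
    (∀ g : B ⟶ A,
      (∀ (W Z : C) (x : W ⟶ A) (y : Z ⟶ B), U.uip (x ≫ f) y = U.uip x (y ≫ g)) →
      g = U.adj f) := by
  constructor
  · intro W Z x y
    unfold UnitaryStruct.uip
    rw [D.dmap_comp, ← Category.assoc, ← Category.assoc, Category.assoc x f,
      adj_key U f, ← Category.assoc]
    simp only [Category.assoc]
  · intro g hg
    have h := hg A B (𝟙 A) (𝟙 B)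
    unfold UnitaryStruct.uip at h
    rw [Category.id_comp, Category.id_comp, Category.id_comp, D.dmap_id,
      Category.comp_id] at h
    -- h : f ≫ U.φ B = U.φ A ≫ D.dmap g
    have h2 : D.dmap g = U.φinv A ≫ f ≫ U.φ B := by
      rw [h, ← Category.assoc, U.φ_inv_hom, Category.id_comp]
    have h3 : g = D.ι B ≫ D.dmap (D.dmap g) ≫ D.ιinv A := by
      rw [← Category.assoc, ← D.ι_natural, Category.assoc, D.ι_hom_inv, Category.comp_id]
    rw [h3, h2, D.dmap_comp, D.dmap_comp]
    simp only [Category.assoc]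
    rw [phi_dd_iotainv, ← Category.assoc, iota_dmap_phi]
    rfl
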